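/- Let G be a topological gyrogroup and H an L-subgyrogroup of G. Endow the set G/H of left cosets with the quotient topology induced by the map P : G → G/H, P(x) = x ⊕ H. Then P is an open map. -/
import Mathlib


open Set Topology

universe u

class Gyrogroup (G : Type u) where
  op : G → G → G
  one : G
  inv : G → G
  gyr : G → G → G ≃ G
  one_op : ∀ g, op one g = g
  op_one : ∀ g, op g one = g
  inv_op : ∀ g, op (inv g) g = one
  op_inv : ∀ g, op g (inv g) = one
  unique_one : ∀ e : G, (∀ g, op e g = g ∧ op g e = g) → e = one
  unique_inv : ∀ g h : G, (op h g = one ∧ op g h = one) → h = inv g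
  gyr_op : ∀ g h f, op g (op h f) = op (op g h) (gyr g h f)
  gyr_hom : ∀ g h a b, gyr g h (op a b) = op (gyr g h a) (gyr g h b)
  loop : ∀ g h, gyr g h = gyr (op g h) h

namespace Gyrogroup

variable {G : Type u} [Gyrogroup G]

/-- `H` is a subgyrogroup: nonempty and a gyrogroup under the restricted operations. -/
def IsSubgyrogroup (H : Set G) : Prop :=
  H.Nonempty ∧ one ∈ H ∧
  (∀ a ∈ H, ∀ b ∈ H, op a b ∈ H) ∧
  (∀ a ∈ H, inv a ∈ H) ∧
  (∀ a ∈ H, ∀ b ∈ H, Set.BijOn (gyr a b) H H)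

/-- `H` is an L-subgyrogroup: `gyr g h` fixes `H` setwise for every `g ∈ G`, `h ∈ H`. -/
def IsLSubgyrogroup (H : Set G) : Prop :=
  IsSubgyrogroup H ∧ ∀ g : G, ∀ h ∈ H, (gyr g h) '' H = H

def leftCoset (a : G) (H : Set G) : Set G := (fun h => op a h) '' H

/-- The subgyrogroup generated by `S`. -/
def generatedSubgyrogroup (S : Set G) : Set G :=
  ⋂₀ {H : Set G | IsSubgyrogroup H ∧ S ⊆ H}

/-- The gyrogroup operations are continuous (topological gyrogroup). -/
def ContinuousGyroOps (G : Type u) [Gyrogroup G] [TopologicalSpace G] : Prop :=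
  Continuous (fun p : G × G => op p.1 p.2) ∧ Continuous (inv : G → G)

/-- The topology coincides with the order topology of some linear order. -/
def TopologicallyOrderable (G : Type u) [t : TopologicalSpace G] : Prop :=
  ∃ l : LinearOrder G, t = TopologicalSpace.generateFrom
      {s : Set G | ∃ a : G, s = {x | l.lt a x} ∨ s = {x | l.lt x a}}

/-- A strongly topological gyrogroup: a topological gyrogroup with a neighborhood base
at `1` whose members are invariant under all gyroautomorphisms. -/
def StronglyTopologicalGyrogroup (G : Type u) [Gyrogroup G] [TopologicalSpace G] : Prop :=
  ContinuousGyroOps G ∧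
  ∃ 𝒰 : Set (Set G), (∀ U ∈ 𝒰, U ∈ nhds (one : G)) ∧
    (∀ V ∈ nhds (one : G), ∃ U ∈ 𝒰, U ⊆ V) ∧
    (∀ U ∈ 𝒰, ∀ x y : G, (gyr x y) '' U = U)

def StronglyTopologicallyOrderable (G : Type u) [Gyrogroup G] [TopologicalSpace G] : Prop :=
  StronglyTopologicalGyrogroup G ∧ TopologicallyOrderable G

end Gyrogroup

open Gyrogroup

namespace Gyrogroup

variable {G : Type u} [Gyrogroup G]

private theorem aux1 (a b : G) : op (inv a) (op a b) = gyr one a b := by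
  rw [gyr_op, inv_op, one_op, loop, inv_op]

private theorem op_left_injective (a : G) : Function.Injective (op a) := fun x y h => by
  have h2 := congrArg (op (inv a)) h
  rw [aux1, aux1] at h2
  exact (gyr (one : G) a).injective h2

private theorem gyr_one_apply (h f : G) : gyr one h f = f := by
  have h2 := gyr_op (G := G) one h f
  rw [one_op, one_op] at h2
  exact (op_left_injective h h2).symm

private theorem inv_op_cancel (a b : G) : op (inv a) (op a b) = b := by
  rw [aux1, gyr_one_apply]

private theorem inv_inv' (a : G) : inv (inv a) = a :=
  (unique_inv (inv a) a ⟨op_inv a, inv_op a⟩).symm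

private theorem op_inv_cancel (a b : G) : op a (op (inv a) b) = b := by
  have h2 := inv_op_cancel (inv a) b
  rwa [inv_inv'] at h2

private theorem leftCoset_op_mem {H : Set G} (hH : IsLSubgyrogroup H) (x h : G) (hh : h ∈ H) :
    leftCoset (op x h) H = leftCoset x H := by
  obtain ⟨⟨-, _, hop, hinv, -⟩, hgyr⟩ := hH
  ext y
  constructor
  · rintro ⟨k, hk, rfl⟩
    refine ⟨op h ((gyr x h).symm k), hop h hh _ ?_, ?_⟩
    · rw [← hgyr x h hh] at hk
      obtain ⟨f, hf, hfk⟩ := hk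
      have : (gyr x h).symm k = f := by rw [← hfk]; exact (gyr x h).symm_apply_apply f
      rw [this]; exact hf
    · show op x (op h ((gyr x h).symm k)) = op (op x h) k
      rw [gyr_op, Equiv.apply_symm_apply]
  · rintro ⟨k, hk, rfl⟩
    refine ⟨gyr x h (op (inv h) k), ?_, ?_⟩
    · have hm : op (inv h) k ∈ H := hop _ (hinv h hh) _ hk
      rw [← hgyr x h hh]; exact ⟨_, hm, rfl⟩
    · show op (op x h) (gyr x h (op (inv h) k)) = op x k
      rw [← gyr_op, op_inv_cancel]

end Gyrogroup

/-- The natural map `P : G → G/H`, `P x = x ⊕ H`, is open for the quotient topology. -/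
theorem stmt3 {G : Type u} [Gyrogroup G] [t : TopologicalSpace G]
    (hc : ContinuousGyroOps G) (H : Set G) (hH : IsLSubgyrogroup H) :
    @IsOpenMap G (Set G) t (TopologicalSpace.coinduced (fun x : G => leftCoset x H) t)
      (fun x : G => leftCoset x H) := by
  intro U hU
  rw [isOpen_coinduced]
  have key : (fun x : G => leftCoset x H) ⁻¹' ((fun x : G => leftCoset x H) '' U)
      = ⋃ h ∈ H, (fun x => op x h) ⁻¹' U := by
    ext x
    simp only [mem_preimage, mem_image, mem_iUnion]
    constructor
    · rintro ⟨u, hu, heq⟩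
      have hone := hH.1.2.1
      have hu' : u ∈ leftCoset x H := heq ▸ ⟨one, hone, op_one u⟩
      obtain ⟨h, hh, rfl⟩ := hu'
      exact ⟨h, hh, hu⟩
    · rintro ⟨h, hh, hx⟩
      exact ⟨op x h, hx, leftCoset_op_mem hH x h hh⟩
  rw [key]
  exact isOpen_biUnion fun h _ =>
    hU.preimage (hc.1.comp (continuous_id.prodMk continuous_const))
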